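/- Let x = (x₁,x₂) ∈ ℝ² with x ≠ 0 and suppose y = (y₁,y₂,y₃) = μ·(x₁², 2x₁x₂, x₂²) for some μ ∈ ℝ with μ ≠ 0 (i.e. the quadratic form y is a nonzero multiple of the square of the linear form x). Let L be a real Lie algebra with a basis e₁,…,e₆ whose brackets are those of g(x,y). Then L is a nilpotent Lie algebra whose derived algebra [L,L] is 3-dimensional (in particular L is not abelian); it is isomorphic to the 6-dimensional nilpotent Lie algebra with structural equations (0,0,0,12,13,23). -/

import Mathlib

set_option maxHeartbeats 2000000


noncomputable section

/-- `Wpair i j v w = vᵢwⱼ − vⱼwᵢ`, the evaluation of `eⁱ∧eʲ` on `(v,w)`. -/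
def Wpair (i j : Fin 6) (v w : Fin 6 → ℝ) : ℝ := v i * w j - v j * w i

/-- The antisymmetric bilinear bracket of `g(x,y)` on `ℝ⁶`, determined (in 1-based index
notation) by `[e₃,e₅] = (x₁y₂−x₂y₁)e₁ − x₁y₁e₂`, `[e₃,e₆] = [e₄,e₅] = x₁y₃e₁ − x₂y₁e₂`,
`[e₄,e₆] = x₂y₃e₁ + (x₁y₃−x₂y₂)e₂`, `[e₁,e₅] = (x₂y₁−x₁y₂)e₃ + x₁y₁e₄`,
`[e₁,e₆] = [e₂,e₅] = −x₁y₃e₃ + x₂y₁e₄`, `[e₂,e₆] = −x₂y₃e₃ + (x₂y₂−x₁y₃)e₄`,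
`[e₁,e₃] = (x₁y₂−x₂y₁)e₅ − x₁y₁e₆`, `[e₁,e₄] = [e₂,e₃] = x₁y₃e₅ − x₂y₁e₆`,
`[e₂,e₄] = x₂y₃e₅ + (x₁y₃−x₂y₂)e₆`, `[e₁,e₂] = [e₃,e₄] = [e₅,e₆] = 0`. -/
def brXY (x : Fin 2 → ℝ) (y : Fin 3 → ℝ) (v w : Fin 6 → ℝ) : Fin 6 → ℝ :=
  ![(x 0 * y 1 - x 1 * y 0) * Wpair 2 4 v w + x 0 * y 2 * (Wpair 2 5 v w + Wpair 3 4 v w) +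
      x 1 * y 2 * Wpair 3 5 v w,
    -(x 0 * y 0 * Wpair 2 4 v w) - x 1 * y 0 * (Wpair 2 5 v w + Wpair 3 4 v w) +
      (x 0 * y 2 - x 1 * y 1) * Wpair 3 5 v w,
    (x 1 * y 0 - x 0 * y 1) * Wpair 0 4 v w - x 0 * y 2 * (Wpair 0 5 v w + Wpair 1 4 v w) -
      x 1 * y 2 * Wpair 1 5 v w,
    x 0 * y 0 * Wpair 0 4 v w + x 1 * y 0 * (Wpair 0 5 v w + Wpair 1 4 v w) +
      (x 1 * y 1 - x 0 * y 2) * Wpair 1 5 v w,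
    (x 0 * y 1 - x 1 * y 0) * Wpair 0 2 v w + x 0 * y 2 * (Wpair 0 3 v w + Wpair 1 2 v w) +
      x 1 * y 2 * Wpair 1 3 v w,
    -(x 0 * y 0 * Wpair 0 2 v w) - x 1 * y 0 * (Wpair 0 3 v w + Wpair 1 2 v w) +
      (x 0 * y 2 - x 1 * y 1) * Wpair 1 3 v w]

/-- A basis `e` of a real Lie algebra `L` realizes the brackets of `g(x,y)` if the bracket of
any two basis vectors is given by the structure constants of `brXY x y`. -/
def RealizesGXY {L : Type*} [LieRing L] [LieAlgebra ℝ L] (x : Fin 2 → ℝ) (y : Fin 3 → ℝ)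
    (e : Module.Basis (Fin 6) ℝ L) : Prop :=
  ∀ i j : Fin 6, ⁅e i, e j⁆ = ∑ k, brXY x y (Pi.single i 1) (Pi.single j 1) k • e k

theorem vec6_five {α : Type*} (a b c d e f : α) : ![a,b,c,d,e,f] 5 = f := rfl

theorem aux6 {L : Type*} [LieRing L] [LieAlgebra ℝ L] (f : Module.Basis (Fin 6) ℝ L)
    (h01 : ⁅f 0, f 1⁆ = f 3) (h02 : ⁅f 0, f 2⁆ = f 4) (h12 : ⁅f 1, f 2⁆ = f 5)
    (hz' : ∀ i j : Fin 6, i < j → 3 ≤ j → ⁅f i, f j⁆ = 0) :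
    LieRing.IsNilpotent L ∧
    Module.finrank ℝ ↥(⁅(⊤ : LieIdeal ℝ L), (⊤ : LieIdeal ℝ L)⁆ : LieIdeal ℝ L) = 3 ∧
    ¬IsLieAbelian L ∧
    ∃ f : Module.Basis (Fin 6) ℝ L,
      ⁅f 0, f 1⁆ = f 3 ∧ ⁅f 0, f 2⁆ = f 4 ∧ ⁅f 1, f 2⁆ = f 5 ∧
      ⁅f 0, f 3⁆ = 0 ∧ ⁅f 0, f 4⁆ = 0 ∧ ⁅f 0, f 5⁆ = 0 ∧
      ⁅f 1, f 3⁆ = 0 ∧ ⁅f 1, f 4⁆ = 0 ∧ ⁅f 1, f 5⁆ = 0 ∧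
      ⁅f 2, f 3⁆ = 0 ∧ ⁅f 2, f 4⁆ = 0 ∧ ⁅f 2, f 5⁆ = 0 ∧
      ⁅f 3, f 4⁆ = 0 ∧ ⁅f 3, f 5⁆ = 0 ∧ ⁅f 4, f 5⁆ = 0 := by
  have hz : ∀ i j : Fin 6, 3 ≤ j → ⁅f i, f j⁆ = 0 := by
    intro i j hj
    rcases lt_trichotomy i j with h | h | h
    · exact hz' i j h hj
    · rw [h, lie_self]
    · rw [show ⁅f i, f j⁆ = -⁅f j, f i⁆ by rw [← lie_skew (f j) (f i), neg_neg],
        hz' j i h (le_trans hj h.le), neg_zero]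
  set g3 : Fin 3 → L := ![f 3, f 4, f 5] with hg3
  set S : Submodule ℝ L := Submodule.span ℝ (Set.range g3) with hS
  have hmem3 : f 3 ∈ S := Submodule.subset_span ⟨0, rfl⟩
  have hmem4 : f 4 ∈ S := Submodule.subset_span ⟨1, rfl⟩
  have hmem5 : f 5 ∈ S := Submodule.subset_span ⟨2, rfl⟩
  have hbr : ∀ i j : Fin 6, ⁅f i, f j⁆ ∈ S := by
    have sorted : ∀ i j : Fin 6, i < j → ⁅f i, f j⁆ ∈ S := by
      intro i j hij
      rcases le_or_gt 3 j with hj | hj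
      · rw [hz i j hj]; exact S.zero_mem
      · fin_cases i <;> fin_cases j <;>
          first
            | exact absurd hij (by decide)
            | exact absurd hj (by decide)
            | exact (show ⁅f 0, f 1⁆ ∈ S by rw [h01]; exact hmem3)
            | exact (show ⁅f 0, f 2⁆ ∈ S by rw [h02]; exact hmem4)
            | exact (show ⁅f 1, f 2⁆ ∈ S by rw [h12]; exact hmem5)
    intro i j
    rcases lt_trichotomy i j with h | h | h
    · exact sorted i j h
    · rw [h, lie_self]; exact S.zero_mem
    · rw [show ⁅f i, f j⁆ = -⁅f j, f i⁆ by rw [← lie_skew (f j) (f i), neg_neg]]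
      exact S.neg_mem (sorted j i h)
  have hfz : ∀ (u : L) (j : Fin 6), 3 ≤ j → ⁅u, f j⁆ = 0 := by
    intro u j hj
    have had : LieAlgebra.ad ℝ L (f j) = 0 := by
      apply f.ext
      intro i
      simp only [LieAlgebra.ad_apply, LinearMap.zero_apply]
      rw [show ⁅f j, f i⁆ = -⁅f i, f j⁆ by rw [← lie_skew (f i) (f j), neg_neg],
        hz i j hj, neg_zero]
    rw [show ⁅u, f j⁆ = -⁅f j, u⁆ by rw [← lie_skew (f j) u, neg_neg],
      show ⁅f j, u⁆ = LieAlgebra.ad ℝ L (f j) u from rfl, had, LinearMap.zero_apply, neg_zero]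
  have hcent : ∀ (u m : L), m ∈ S → ⁅u, m⁆ = 0 := by
    intro u m hm
    induction hm using Submodule.span_induction with
    | mem m hm =>
        obtain ⟨i, rfl⟩ := hm
        fin_cases i
        · exact hfz u 3 (by decide)
        · exact hfz u 4 (by decide)
        · exact hfz u 5 (by decide)
    | zero => exact lie_zero u
    | add a b _ _ ha hb => rw [lie_add, ha, hb, add_zero]
    | smul t a _ ha => rw [lie_smul, ha, smul_zero]
  have houter : ∀ u v : L, ⁅u, v⁆ ∈ S := by
    have inner : ∀ u : L, (∀ j, ⁅u, f j⁆ ∈ S) → ∀ v : L, ⁅u, v⁆ ∈ S := by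
      intro u hu v
      have hv : v ∈ Submodule.span ℝ (Set.range f) := by rw [f.span_eq]; exact Submodule.mem_top
      induction hv using Submodule.span_induction with
      | mem m hm => obtain ⟨j, rfl⟩ := hm; exact hu j
      | zero => rw [lie_zero]; exact S.zero_mem
      | add a b _ _ ha hb => rw [lie_add]; exact S.add_mem ha hb
      | smul t a _ ha => rw [lie_smul]; exact S.smul_mem t ha
    intro u
    have hu : u ∈ Submodule.span ℝ (Set.range f) := by rw [f.span_eq]; exact Submodule.mem_top
    induction hu using Submodule.span_induction with
    | mem m hm =>
        obtain ⟨i, rfl⟩ := hm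
        exact inner (f i) (fun j => hbr i j)
    | zero => intro v; rw [zero_lie]; exact S.zero_mem
    | add a b _ _ ha hb => intro v; rw [add_lie]; exact S.add_mem (ha v) (hb v)
    | smul t a _ ha => intro v; rw [smul_lie]; exact S.smul_mem t (ha v)
  have hI : LieSubmodule.toSubmodule (⁅(⊤ : LieIdeal ℝ L), (⊤ : LieIdeal ℝ L)⁆ : LieIdeal ℝ L) = S := by
    apply le_antisymm
    · rw [LieSubmodule.lieIdeal_oper_eq_linear_span', Submodule.span_le]
      rintro m ⟨u, -, v, -, rfl⟩
      exact houter u v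
    · rw [Submodule.span_le]
      rintro m ⟨i, rfl⟩
      have H : ∀ u v : L, ⁅u, v⁆ ∈ (⁅(⊤ : LieIdeal ℝ L), (⊤ : LieIdeal ℝ L)⁆ : LieIdeal ℝ L) :=
        fun u v => LieSubmodule.lie_mem_lie (LieSubmodule.mem_top u) (LieSubmodule.mem_top v)
      simp only [SetLike.mem_coe, LieSubmodule.mem_toSubmodule]
      fin_cases i
      · show f 3 ∈ _; rw [← h01]; exact H _ _
      · show f 4 ∈ _; rw [← h02]; exact H _ _
      · show f 5 ∈ _; rw [← h12]; exact H _ _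
  have hli : LinearIndependent ℝ g3 := by
    have : g3 = f ∘ ![3, 4, 5] := by
      ext i; fin_cases i <;> rfl
    rw [this]
    exact f.linearIndependent.comp ![3, 4, 5] (by decide)
  have hfinS : Module.finrank ℝ S = 3 := by
    rw [hS, finrank_span_eq_card hli]
    simp
  refine ⟨?_, ?_, ?_, f, h01, h02, h12,
    hz 0 3 (by decide), hz 0 4 (by decide), hz 0 5 (by decide),
    hz 1 3 (by decide), hz 1 4 (by decide), hz 1 5 (by decide),
    hz 2 3 (by decide), hz 2 4 (by decide), hz 2 5 (by decide),
    hz 3 4 (by decide), hz 3 5 (by decide), hz 4 5 (by decide)⟩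
  · refine LieModule.IsNilpotent.mk (R := ℝ) (M := L) (k := 2) ?_
    have h2 : LieModule.lowerCentralSeries ℝ L L 2 =
        ⁅(⊤ : LieIdeal ℝ L), LieModule.lowerCentralSeries ℝ L L 1⁆ := rfl
    have hlcs1 : LieSubmodule.toSubmodule (LieModule.lowerCentralSeries ℝ L L 1) ≤ S := by
      have : LieModule.lowerCentralSeries ℝ L L 1 = ⁅(⊤ : LieIdeal ℝ L), (⊤ : LieIdeal ℝ L)⁆ := rfl
      rw [this, hI]
    rw [h2, LieSubmodule.eq_bot_iff]
    intro m hm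
    rw [LieSubmodule.lieIdeal_oper_eq_span] at hm
    have : m ∈ (⊥ : LieSubmodule ℝ L L) := by
      revert hm
      refine fun hm => LieSubmodule.lieSpan_le.mpr ?_ hm
      rintro z ⟨u, n, rfl⟩
      have hn : (n : L) ∈ S := hlcs1 n.2
      simp only [SetLike.mem_coe, LieSubmodule.mem_bot]
      exact hcent u n hn
    simpa using this
  · show Module.finrank ℝ
      (LieSubmodule.toSubmodule (⁅(⊤ : LieIdeal ℝ L), (⊤ : LieIdeal ℝ L)⁆ : LieIdeal ℝ L)) = 3
    rw [hI]
    exact hfinS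
  · intro habl
    have : ⁅f 0, f 1⁆ = 0 := trivial_lie_zero L L (f 0) (f 1)
    rw [h01] at this
    exact f.ne_zero 3 this


/-- If `y` is a nonzero multiple of the square of the nonzero linear form `x`, then `g(x,y)` is
nilpotent with 3-dimensional derived algebra, and is isomorphic to the nilpotent Lie algebra
with structural equations `(0,0,0,12,13,23)`. -/
theorem stmt10 (x : Fin 2 → ℝ) (y : Fin 3 → ℝ) (hx : x ≠ 0) (μ : ℝ) (hμ : μ ≠ 0)
    (hy : y = μ • ![x 0 ^ 2, 2 * x 0 * x 1, x 1 ^ 2])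
    (L : Type*) [LieRing L] [LieAlgebra ℝ L] (e : Module.Basis (Fin 6) ℝ L)
    (he : RealizesGXY x y e) :
    LieRing.IsNilpotent L ∧
    Module.finrank ℝ ↥(⁅(⊤ : LieIdeal ℝ L), (⊤ : LieIdeal ℝ L)⁆ : LieIdeal ℝ L) = 3 ∧
    ¬IsLieAbelian L ∧
    -- `L` has a basis realizing the structural equations `(0,0,0,12,13,23)`
    ∃ f : Module.Basis (Fin 6) ℝ L,
      ⁅f 0, f 1⁆ = f 3 ∧ ⁅f 0, f 2⁆ = f 4 ∧ ⁅f 1, f 2⁆ = f 5 ∧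
      ⁅f 0, f 3⁆ = 0 ∧ ⁅f 0, f 4⁆ = 0 ∧ ⁅f 0, f 5⁆ = 0 ∧
      ⁅f 1, f 3⁆ = 0 ∧ ⁅f 1, f 4⁆ = 0 ∧ ⁅f 1, f 5⁆ = 0 ∧
      ⁅f 2, f 3⁆ = 0 ∧ ⁅f 2, f 4⁆ = 0 ∧ ⁅f 2, f 5⁆ = 0 ∧
      ⁅f 3, f 4⁆ = 0 ∧ ⁅f 3, f 5⁆ = 0 ∧ ⁅f 4, f 5⁆ = 0 := by
  have hs : x 0 ^ 2 + x 1 ^ 2 ≠ 0 := by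
    intro h
    apply hx
    have h0 : x 0 = 0 := by nlinarith [sq_nonneg (x 0), sq_nonneg (x 1)]
    have h1 : x 1 = 0 := by nlinarith [sq_nonneg (x 0), sq_nonneg (x 1)]
    funext i
    fin_cases i
    · simpa using h0
    · simpa using h1
  have hc : μ * (x 0 ^ 2 + x 1 ^ 2) ^ 2 ≠ 0 := mul_ne_zero hμ (pow_ne_zero 2 hs)
  have h01 := he 0 1
  simp [brXY, Wpair, hy, Fin.sum_univ_six, Pi.single_apply, vec6_five] at h01
  have h02 := he 0 2
  simp [brXY, Wpair, hy, Fin.sum_univ_six, Pi.single_apply, vec6_five] at h02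
  have h03 := he 0 3
  simp [brXY, Wpair, hy, Fin.sum_univ_six, Pi.single_apply, vec6_five] at h03
  have h04 := he 0 4
  simp [brXY, Wpair, hy, Fin.sum_univ_six, Pi.single_apply, vec6_five] at h04
  have h05 := he 0 5
  simp [brXY, Wpair, hy, Fin.sum_univ_six, Pi.single_apply, vec6_five] at h05
  have h12 := he 1 2
  simp [brXY, Wpair, hy, Fin.sum_univ_six, Pi.single_apply, vec6_five] at h12
  have h13 := he 1 3
  simp [brXY, Wpair, hy, Fin.sum_univ_six, Pi.single_apply, vec6_five] at h13
  have h14 := he 1 4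
  simp [brXY, Wpair, hy, Fin.sum_univ_six, Pi.single_apply, vec6_five] at h14
  have h15 := he 1 5
  simp [brXY, Wpair, hy, Fin.sum_univ_six, Pi.single_apply, vec6_five] at h15
  have h23 := he 2 3
  simp [brXY, Wpair, hy, Fin.sum_univ_six, Pi.single_apply, vec6_five] at h23
  have h24 := he 2 4
  simp [brXY, Wpair, hy, Fin.sum_univ_six, Pi.single_apply, vec6_five] at h24
  have h25 := he 2 5
  simp [brXY, Wpair, hy, Fin.sum_univ_six, Pi.single_apply, vec6_five] at h25
  have h34 := he 3 4
  simp [brXY, Wpair, hy, Fin.sum_univ_six, Pi.single_apply, vec6_five] at h34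
  have h35 := he 3 5
  simp [brXY, Wpair, hy, Fin.sum_univ_six, Pi.single_apply, vec6_five] at h35
  have h45 := he 4 5
  simp [brXY, Wpair, hy, Fin.sum_univ_six, Pi.single_apply, vec6_five] at h45
  have r10 : ⁅e 1, e 0⁆ = -⁅e 0, e 1⁆ := by rw [← lie_skew (e 0) (e 1), neg_neg]
  have r20 : ⁅e 2, e 0⁆ = -⁅e 0, e 2⁆ := by rw [← lie_skew (e 0) (e 2), neg_neg]
  have r30 : ⁅e 3, e 0⁆ = -⁅e 0, e 3⁆ := by rw [← lie_skew (e 0) (e 3), neg_neg]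
  have r40 : ⁅e 4, e 0⁆ = -⁅e 0, e 4⁆ := by rw [← lie_skew (e 0) (e 4), neg_neg]
  have r50 : ⁅e 5, e 0⁆ = -⁅e 0, e 5⁆ := by rw [← lie_skew (e 0) (e 5), neg_neg]
  have r21 : ⁅e 2, e 1⁆ = -⁅e 1, e 2⁆ := by rw [← lie_skew (e 1) (e 2), neg_neg]
  have r31 : ⁅e 3, e 1⁆ = -⁅e 1, e 3⁆ := by rw [← lie_skew (e 1) (e 3), neg_neg]
  have r41 : ⁅e 4, e 1⁆ = -⁅e 1, e 4⁆ := by rw [← lie_skew (e 1) (e 4), neg_neg]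
  have r51 : ⁅e 5, e 1⁆ = -⁅e 1, e 5⁆ := by rw [← lie_skew (e 1) (e 5), neg_neg]
  have r32 : ⁅e 3, e 2⁆ = -⁅e 2, e 3⁆ := by rw [← lie_skew (e 2) (e 3), neg_neg]
  have r42 : ⁅e 4, e 2⁆ = -⁅e 2, e 4⁆ := by rw [← lie_skew (e 2) (e 4), neg_neg]
  have r52 : ⁅e 5, e 2⁆ = -⁅e 2, e 5⁆ := by rw [← lie_skew (e 2) (e 5), neg_neg]
  have r43 : ⁅e 4, e 3⁆ = -⁅e 3, e 4⁆ := by rw [← lie_skew (e 3) (e 4), neg_neg]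
  have r53 : ⁅e 5, e 3⁆ = -⁅e 3, e 5⁆ := by rw [← lie_skew (e 3) (e 5), neg_neg]
  have r54 : ⁅e 5, e 4⁆ = -⁅e 4, e 5⁆ := by rw [← lie_skew (e 4) (e 5), neg_neg]
  obtain ⟨vv, hvv⟩ : ∃ vv : Fin 6 → L, vv = ![(x 0) • e 0 + (x 1) • e 1, (x 0) • e 2 + (x 1) • e 3, (x 0) • e 4 + (x 1) • e 5, ((μ * (x 0 ^ 2 + x 1 ^ 2) ^ 2) * (x 1)) • e 4 - ((μ * (x 0 ^ 2 + x 1 ^ 2) ^ 2) * (x 0)) • e 5, -(((μ * (x 0 ^ 2 + x 1 ^ 2) ^ 2) * (x 1)) • e 2) + ((μ * (x 0 ^ 2 + x 1 ^ 2) ^ 2) * (x 0)) • e 3, ((μ * (x 0 ^ 2 + x 1 ^ 2) ^ 2) * (x 1)) • e 0 - ((μ * (x 0 ^ 2 + x 1 ^ 2) ^ 2) * (x 0)) • e 1] := ⟨_, rfl⟩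
  obtain ⟨ww, hww⟩ : ∃ ww : Fin 6 → L, ww = ![((x 0) / (x 0 ^ 2 + x 1 ^ 2)) • e 0 + ((x 1) / ((μ * (x 0 ^ 2 + x 1 ^ 2) ^ 2) * (x 0 ^ 2 + x 1 ^ 2))) • e 5, ((x 1) / (x 0 ^ 2 + x 1 ^ 2)) • e 0 - ((x 0) / ((μ * (x 0 ^ 2 + x 1 ^ 2) ^ 2) * (x 0 ^ 2 + x 1 ^ 2))) • e 5, ((x 0) / (x 0 ^ 2 + x 1 ^ 2)) • e 1 - ((x 1) / ((μ * (x 0 ^ 2 + x 1 ^ 2) ^ 2) * (x 0 ^ 2 + x 1 ^ 2))) • e 4, ((x 1) / (x 0 ^ 2 + x 1 ^ 2)) • e 1 + ((x 0) / ((μ * (x 0 ^ 2 + x 1 ^ 2) ^ 2) * (x 0 ^ 2 + x 1 ^ 2))) • e 4, ((x 0) / (x 0 ^ 2 + x 1 ^ 2)) • e 2 + ((x 1) / ((μ * (x 0 ^ 2 + x 1 ^ 2) ^ 2) * (x 0 ^ 2 + x 1 ^ 2))) • e 3, ((x 1) / (x 0 ^ 2 + x 1 ^ 2)) • e 2 -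 ((x 0) / ((μ * (x 0 ^ 2 + x 1 ^ 2) ^ 2) * (x 0 ^ 2 + x 1 ^ 2))) • e 3] := ⟨_, rfl⟩
  have qTU0 : ((e.constr (M' := L) ℝ vv) ∘ₗ (e.constr (M' := L) ℝ ww)) (e 0) = (LinearMap.id : L →ₗ[ℝ] L) (e 0) := by
    simp only [LinearMap.comp_apply, LinearMap.id_apply, Module.Basis.constr_basis, hvv, hww,
      Matrix.cons_val_zero, Matrix.cons_val_one, Matrix.head_cons, Matrix.cons_val_two,
      Matrix.tail_cons, Matrix.cons_val_three, Matrix.cons_val_four, vec6_five, map_add, map_sub, map_neg, map_smul]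
    match_scalars <;> field_simp <;> ring
  have qTU1 : ((e.constr (M' := L) ℝ vv) ∘ₗ (e.constr (M' := L) ℝ ww)) (e 1) = (LinearMap.id : L →ₗ[ℝ] L) (e 1) := by
    simp only [LinearMap.comp_apply, LinearMap.id_apply, Module.Basis.constr_basis, hvv, hww,
      Matrix.cons_val_zero, Matrix.cons_val_one, Matrix.head_cons, Matrix.cons_val_two,
      Matrix.tail_cons, Matrix.cons_val_three, Matrix.cons_val_four, vec6_five, map_add, map_sub, map_neg, map_smul]
    match_scalars <;> field_simp <;> ring
  have qTU2 : ((e.constr (M' := L) ℝ vv) ∘ₗ (e.constr (M' := L) ℝ ww)) (e 2) = (LinearMap.id : L →ₗ[ℝ] L) (e 2) := by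
    simp only [LinearMap.comp_apply, LinearMap.id_apply, Module.Basis.constr_basis, hvv, hww,
      Matrix.cons_val_zero, Matrix.cons_val_one, Matrix.head_cons, Matrix.cons_val_two,
      Matrix.tail_cons, Matrix.cons_val_three, Matrix.cons_val_four, vec6_five, map_add, map_sub, map_neg, map_smul]
    match_scalars <;> field_simp <;> ring
  have qTU3 : ((e.constr (M' := L) ℝ vv) ∘ₗ (e.constr (M' := L) ℝ ww)) (e 3) = (LinearMap.id : L →ₗ[ℝ] L) (e 3) := by
    simp only [LinearMap.comp_apply, LinearMap.id_apply, Module.Basis.constr_basis, hvv, hww,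
      Matrix.cons_val_zero, Matrix.cons_val_one, Matrix.head_cons, Matrix.cons_val_two,
      Matrix.tail_cons, Matrix.cons_val_three, Matrix.cons_val_four, vec6_five, map_add, map_sub, map_neg, map_smul]
    match_scalars <;> field_simp <;> ring
  have qTU4 : ((e.constr (M' := L) ℝ vv) ∘ₗ (e.constr (M' := L) ℝ ww)) (e 4) = (LinearMap.id : L →ₗ[ℝ] L) (e 4) := by
    simp only [LinearMap.comp_apply, LinearMap.id_apply, Module.Basis.constr_basis, hvv, hww,
      Matrix.cons_val_zero, Matrix.cons_val_one, Matrix.head_cons, Matrix.cons_val_two,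
      Matrix.tail_cons, Matrix.cons_val_three, Matrix.cons_val_four, vec6_five, map_add, map_sub, map_neg, map_smul]
    match_scalars <;> field_simp <;> ring
  have qTU5 : ((e.constr (M' := L) ℝ vv) ∘ₗ (e.constr (M' := L) ℝ ww)) (e 5) = (LinearMap.id : L →ₗ[ℝ] L) (e 5) := by
    simp only [LinearMap.comp_apply, LinearMap.id_apply, Module.Basis.constr_basis, hvv, hww,
      Matrix.cons_val_zero, Matrix.cons_val_one, Matrix.head_cons, Matrix.cons_val_two,
      Matrix.tail_cons, Matrix.cons_val_three, Matrix.cons_val_four, vec6_five, map_add, map_sub, map_neg, map_smul]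
    match_scalars <;> field_simp <;> ring
  have qUT0 : ((e.constr (M' := L) ℝ ww) ∘ₗ (e.constr (M' := L) ℝ vv)) (e 0) = (LinearMap.id : L →ₗ[ℝ] L) (e 0) := by
    simp only [LinearMap.comp_apply, LinearMap.id_apply, Module.Basis.constr_basis, hvv, hww,
      Matrix.cons_val_zero, Matrix.cons_val_one, Matrix.head_cons, Matrix.cons_val_two,
      Matrix.tail_cons, Matrix.cons_val_three, Matrix.cons_val_four, vec6_five, map_add, map_sub, map_neg, map_smul]
    match_scalars <;> field_simp <;> ring
  have qUT1 : ((e.constr (M' := L) ℝ ww) ∘ₗ (e.constr (M' := L) ℝ vv)) (e 1) = (LinearMap.id : L →ₗ[ℝ] L) (e 1) := by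
    simp only [LinearMap.comp_apply, LinearMap.id_apply, Module.Basis.constr_basis, hvv, hww,
      Matrix.cons_val_zero, Matrix.cons_val_one, Matrix.head_cons, Matrix.cons_val_two,
      Matrix.tail_cons, Matrix.cons_val_three, Matrix.cons_val_four, vec6_five, map_add, map_sub, map_neg, map_smul]
    match_scalars <;> field_simp <;> ring
  have qUT2 : ((e.constr (M' := L) ℝ ww) ∘ₗ (e.constr (M' := L) ℝ vv)) (e 2) = (LinearMap.id : L →ₗ[ℝ] L) (e 2) := by
    simp only [LinearMap.comp_apply, LinearMap.id_apply, Module.Basis.constr_basis, hvv, hww,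
      Matrix.cons_val_zero, Matrix.cons_val_one, Matrix.head_cons, Matrix.cons_val_two,
      Matrix.tail_cons, Matrix.cons_val_three, Matrix.cons_val_four, vec6_five, map_add, map_sub, map_neg, map_smul]
    match_scalars <;> field_simp <;> ring
  have qUT3 : ((e.constr (M' := L) ℝ ww) ∘ₗ (e.constr (M' := L) ℝ vv)) (e 3) = (LinearMap.id : L →ₗ[ℝ] L) (e 3) := by
    simp only [LinearMap.comp_apply, LinearMap.id_apply, Module.Basis.constr_basis, hvv, hww,
      Matrix.cons_val_zero, Matrix.cons_val_one, Matrix.head_cons, Matrix.cons_val_two,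
      Matrix.tail_cons, Matrix.cons_val_three, Matrix.cons_val_four, vec6_five, map_add, map_sub, map_neg, map_smul]
    match_scalars <;> field_simp <;> ring
  have qUT4 : ((e.constr (M' := L) ℝ ww) ∘ₗ (e.constr (M' := L) ℝ vv)) (e 4) = (LinearMap.id : L →ₗ[ℝ] L) (e 4) := by
    simp only [LinearMap.comp_apply, LinearMap.id_apply, Module.Basis.constr_basis, hvv, hww,
      Matrix.cons_val_zero, Matrix.cons_val_one, Matrix.head_cons, Matrix.cons_val_two,
      Matrix.tail_cons, Matrix.cons_val_three, Matrix.cons_val_four, vec6_five, map_add, map_sub, map_neg, map_smul]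
    match_scalars <;> field_simp <;> ring
  have qUT5 : ((e.constr (M' := L) ℝ ww) ∘ₗ (e.constr (M' := L) ℝ vv)) (e 5) = (LinearMap.id : L →ₗ[ℝ] L) (e 5) := by
    simp only [LinearMap.comp_apply, LinearMap.id_apply, Module.Basis.constr_basis, hvv, hww,
      Matrix.cons_val_zero, Matrix.cons_val_one, Matrix.head_cons, Matrix.cons_val_two,
      Matrix.tail_cons, Matrix.cons_val_three, Matrix.cons_val_four, vec6_five, map_add, map_sub, map_neg, map_smul]
    match_scalars <;> field_simp <;> ring
  have hTU : (e.constr (M' := L) ℝ vv) ∘ₗ (e.constr (M' := L) ℝ ww) = LinearMap.id := by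
    refine e.ext fun i => ?_
    fin_cases i
    exacts [qTU0, qTU1, qTU2, qTU3, qTU4, qTU5]
  have hUT : (e.constr (M' := L) ℝ ww) ∘ₗ (e.constr (M' := L) ℝ vv) = LinearMap.id := by
    refine e.ext fun i => ?_
    fin_cases i
    exacts [qUT0, qUT1, qUT2, qUT3, qUT4, qUT5]
  obtain ⟨F, hF⟩ : ∃ F : Module.Basis (Fin 6) ℝ L, F =
      e.map (LinearEquiv.ofLinear (e.constr (M' := L) ℝ vv) (e.constr (M' := L) ℝ ww) hTU hUT) :=
    ⟨_, rfl⟩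
  have hFi : ∀ i, F i = vv i := fun i => by
    rw [hF, Module.Basis.map_apply, LinearEquiv.ofLinear_apply, Module.Basis.constr_basis]
  have hb01 : ⁅F 0, F 1⁆ = F 3 := by
    rw [hFi 0, hFi 1, hFi 3]
    simp only [hvv, Matrix.cons_val_zero, Matrix.cons_val_one, Matrix.head_cons, Matrix.cons_val_two,
      Matrix.tail_cons, Matrix.cons_val_three, Matrix.cons_val_four, vec6_five]
    simp only [add_lie, lie_add, sub_lie, lie_sub, neg_lie, lie_neg, smul_lie, lie_smul, lie_self,
      h01, h02, h03, h04, h05, h12, h13, h14, h15, h23, h24, h25, h34, h35, h45, r10, r20, r30, r40, r50, r21, r31, r41, r51, r32, r42, r52, r43, r53, r54]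
    module
  have hb02 : ⁅F 0, F 2⁆ = F 4 := by
    rw [hFi 0, hFi 2, hFi 4]
    simp only [hvv, Matrix.cons_val_zero, Matrix.cons_val_one, Matrix.head_cons, Matrix.cons_val_two,
      Matrix.tail_cons, Matrix.cons_val_three, Matrix.cons_val_four, vec6_five]
    simp only [add_lie, lie_add, sub_lie, lie_sub, neg_lie, lie_neg, smul_lie, lie_smul, lie_self,
      h01, h02, h03, h04, h05, h12, h13, h14, h15, h23, h24, h25, h34, h35, h45, r10, r20, r30, r40, r50, r21, r31, r41, r51, r32, r42, r52, r43, r53, r54]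
    module
  have hb12 : ⁅F 1, F 2⁆ = F 5 := by
    rw [hFi 1, hFi 2, hFi 5]
    simp only [hvv, Matrix.cons_val_zero, Matrix.cons_val_one, Matrix.head_cons, Matrix.cons_val_two,
      Matrix.tail_cons, Matrix.cons_val_three, Matrix.cons_val_four, vec6_five]
    simp only [add_lie, lie_add, sub_lie, lie_sub, neg_lie, lie_neg, smul_lie, lie_smul, lie_self,
      h01, h02, h03, h04, h05, h12, h13, h14, h15, h23, h24, h25, h34, h35, h45, r10, r20, r30, r40, r50, r21, r31, r41, r51, r32, r42, r52, r43, r53, r54]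
    module
  have z03 : ⁅F 0, F 3⁆ = 0 := by
    rw [hFi 0, hFi 3]
    simp only [hvv, Matrix.cons_val_zero, Matrix.cons_val_one, Matrix.head_cons, Matrix.cons_val_two,
      Matrix.tail_cons, Matrix.cons_val_three, Matrix.cons_val_four, vec6_five]
    simp only [add_lie, lie_add, sub_lie, lie_sub, neg_lie, lie_neg, smul_lie, lie_smul, lie_self,
      h01, h02, h03, h04, h05, h12, h13, h14, h15, h23, h24, h25, h34, h35, h45, r10, r20, r30, r40, r50, r21, r31, r41, r51, r32, r42, r52, r43, r53, r54]
    module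
  have z04 : ⁅F 0, F 4⁆ = 0 := by
    rw [hFi 0, hFi 4]
    simp only [hvv, Matrix.cons_val_zero, Matrix.cons_val_one, Matrix.head_cons, Matrix.cons_val_two,
      Matrix.tail_cons, Matrix.cons_val_three, Matrix.cons_val_four, vec6_five]
    simp only [add_lie, lie_add, sub_lie, lie_sub, neg_lie, lie_neg, smul_lie, lie_smul, lie_self,
      h01, h02, h03, h04, h05, h12, h13, h14, h15, h23, h24, h25, h34, h35, h45, r10, r20, r30, r40, r50, r21, r31, r41, r51, r32, r42, r52, r43, r53, r54]
    module
  have z05 : ⁅F 0, F 5⁆ = 0 := by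
    rw [hFi 0, hFi 5]
    simp only [hvv, Matrix.cons_val_zero, Matrix.cons_val_one, Matrix.head_cons, Matrix.cons_val_two,
      Matrix.tail_cons, Matrix.cons_val_three, Matrix.cons_val_four, vec6_five]
    simp only [add_lie, lie_add, sub_lie, lie_sub, neg_lie, lie_neg, smul_lie, lie_smul, lie_self,
      h01, h02, h03, h04, h05, h12, h13, h14, h15, h23, h24, h25, h34, h35, h45, r10, r20, r30, r40, r50, r21, r31, r41, r51, r32, r42, r52, r43, r53, r54]
    module
  have z13 : ⁅F 1, F 3⁆ = 0 := by
    rw [hFi 1, hFi 3]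
    simp only [hvv, Matrix.cons_val_zero, Matrix.cons_val_one, Matrix.head_cons, Matrix.cons_val_two,
      Matrix.tail_cons, Matrix.cons_val_three, Matrix.cons_val_four, vec6_five]
    simp only [add_lie, lie_add, sub_lie, lie_sub, neg_lie, lie_neg, smul_lie, lie_smul, lie_self,
      h01, h02, h03, h04, h05, h12, h13, h14, h15, h23, h24, h25, h34, h35, h45, r10, r20, r30, r40, r50, r21, r31, r41, r51, r32, r42, r52, r43, r53, r54]
    module
  have z14 : ⁅F 1, F 4⁆ = 0 := by
    rw [hFi 1, hFi 4]
    simp only [hvv, Matrix.cons_val_zero, Matrix.cons_val_one, Matrix.head_cons, Matrix.cons_val_two,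
      Matrix.tail_cons, Matrix.cons_val_three, Matrix.cons_val_four, vec6_five]
    simp only [add_lie, lie_add, sub_lie, lie_sub, neg_lie, lie_neg, smul_lie, lie_smul, lie_self,
      h01, h02, h03, h04, h05, h12, h13, h14, h15, h23, h24, h25, h34, h35, h45, r10, r20, r30, r40, r50, r21, r31, r41, r51, r32, r42, r52, r43, r53, r54]
    module
  have z15 : ⁅F 1, F 5⁆ = 0 := by
    rw [hFi 1, hFi 5]
    simp only [hvv, Matrix.cons_val_zero, Matrix.cons_val_one, Matrix.head_cons, Matrix.cons_val_two,
      Matrix.tail_cons, Matrix.cons_val_three, Matrix.cons_val_four, vec6_five]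
    simp only [add_lie, lie_add, sub_lie, lie_sub, neg_lie, lie_neg, smul_lie, lie_smul, lie_self,
      h01, h02, h03, h04, h05, h12, h13, h14, h15, h23, h24, h25, h34, h35, h45, r10, r20, r30, r40, r50, r21, r31, r41, r51, r32, r42, r52, r43, r53, r54]
    module
  have z23 : ⁅F 2, F 3⁆ = 0 := by
    rw [hFi 2, hFi 3]
    simp only [hvv, Matrix.cons_val_zero, Matrix.cons_val_one, Matrix.head_cons, Matrix.cons_val_two,
      Matrix.tail_cons, Matrix.cons_val_three, Matrix.cons_val_four, vec6_five]
    simp only [add_lie, lie_add, sub_lie, lie_sub, neg_lie, lie_neg, smul_lie, lie_smul, lie_self,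
      h01, h02, h03, h04, h05, h12, h13, h14, h15, h23, h24, h25, h34, h35, h45, r10, r20, r30, r40, r50, r21, r31, r41, r51, r32, r42, r52, r43, r53, r54]
    module
  have z24 : ⁅F 2, F 4⁆ = 0 := by
    rw [hFi 2, hFi 4]
    simp only [hvv, Matrix.cons_val_zero, Matrix.cons_val_one, Matrix.head_cons, Matrix.cons_val_two,
      Matrix.tail_cons, Matrix.cons_val_three, Matrix.cons_val_four, vec6_five]
    simp only [add_lie, lie_add, sub_lie, lie_sub, neg_lie, lie_neg, smul_lie, lie_smul, lie_self,
      h01, h02, h03, h04, h05, h12, h13, h14, h15, h23, h24, h25, h34, h35, h45, r10, r20, r30, r40, r50, r21, r31, r41, r51, r32, r42, r52, r43, r53, r54]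
    module
  have z25 : ⁅F 2, F 5⁆ = 0 := by
    rw [hFi 2, hFi 5]
    simp only [hvv, Matrix.cons_val_zero, Matrix.cons_val_one, Matrix.head_cons, Matrix.cons_val_two,
      Matrix.tail_cons, Matrix.cons_val_three, Matrix.cons_val_four, vec6_five]
    simp only [add_lie, lie_add, sub_lie, lie_sub, neg_lie, lie_neg, smul_lie, lie_smul, lie_self,
      h01, h02, h03, h04, h05, h12, h13, h14, h15, h23, h24, h25, h34, h35, h45, r10, r20, r30, r40, r50, r21, r31, r41, r51, r32, r42, r52, r43, r53, r54]
    module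
  have z34 : ⁅F 3, F 4⁆ = 0 := by
    rw [hFi 3, hFi 4]
    simp only [hvv, Matrix.cons_val_zero, Matrix.cons_val_one, Matrix.head_cons, Matrix.cons_val_two,
      Matrix.tail_cons, Matrix.cons_val_three, Matrix.cons_val_four, vec6_five]
    simp only [add_lie, lie_add, sub_lie, lie_sub, neg_lie, lie_neg, smul_lie, lie_smul, lie_self,
      h01, h02, h03, h04, h05, h12, h13, h14, h15, h23, h24, h25, h34, h35, h45, r10, r20, r30, r40, r50, r21, r31, r41, r51, r32, r42, r52, r43, r53, r54]
    module
  have z35 : ⁅F 3, F 5⁆ = 0 := by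
    rw [hFi 3, hFi 5]
    simp only [hvv, Matrix.cons_val_zero, Matrix.cons_val_one, Matrix.head_cons, Matrix.cons_val_two,
      Matrix.tail_cons, Matrix.cons_val_three, Matrix.cons_val_four, vec6_five]
    simp only [add_lie, lie_add, sub_lie, lie_sub, neg_lie, lie_neg, smul_lie, lie_smul, lie_self,
      h01, h02, h03, h04, h05, h12, h13, h14, h15, h23, h24, h25, h34, h35, h45, r10, r20, r30, r40, r50, r21, r31, r41, r51, r32, r42, r52, r43, r53, r54]
    module
  have z45 : ⁅F 4, F 5⁆ = 0 := by
    rw [hFi 4, hFi 5]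
    simp only [hvv, Matrix.cons_val_zero, Matrix.cons_val_one, Matrix.head_cons, Matrix.cons_val_two,
      Matrix.tail_cons, Matrix.cons_val_three, Matrix.cons_val_four, vec6_five]
    simp only [add_lie, lie_add, sub_lie, lie_sub, neg_lie, lie_neg, smul_lie, lie_smul, lie_self,
      h01, h02, h03, h04, h05, h12, h13, h14, h15, h23, h24, h25, h34, h35, h45, r10, r20, r30, r40, r50, r21, r31, r41, r51, r32, r42, r52, r43, r53, r54]
    module
  apply aux6 F hb01 hb02 hb12
  intro i j hij hj
  fin_cases i <;> fin_cases j <;>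
    first
      | exact absurd hij (by decide)
      | exact absurd hj (by decide)
      | exact z03 | exact z04 | exact z05
      | exact z13 | exact z14 | exact z15
      | exact z23 | exact z24 | exact z25
      | exact z34 | exact z35 | exact z45
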